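/- Let σ be a polyhedron in R^n whose recession cone contains a cone τ, and let π : R^n → R^n/span(τ) be the projection. Then π(ρ(σ)) = ρ(π(σ)), i.e., the projection of the recession cone of σ equals the recession cone of the projected polyhedron. -/

import Mathlib

/-- The recession cone of a set `S`. -/
def recCone {V : Type*} [AddCommGroup V] [Module ℝ V] (S : Set V) : Set V :=
  {v | ∀ x ∈ S, ∀ t : ℝ, 0 ≤ t → x + t • v ∈ S}

private lemma key_nonneg (a c : ℝ) (b : ℝ) (h : ∀ t : ℝ, 0 ≤ t → b ≤ a + t * c) :
    0 ≤ c := by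
  by_contra hc
  push_neg at hc
  have hab := h 0 le_rfl
  have h1 : (0:ℝ) < a - b + 1 := by linarith
  have hcne : -c ≠ 0 := by linarith
  have ht : (0:ℝ) ≤ (a - b + 1) / (-c) := div_nonneg (by linarith) (by linarith)
  have h2 := h _ ht
  have hc' : ((a - b + 1) / (-c)) * c = -(a - b + 1) := by
    field_simp [hc.ne]
  rw [hc'] at h2
  linarith

/-- for a nonempty polyhedron `σ` whose recession cone contains a
convex cone `τ`, and `π : ℝⁿ → ℝⁿ/span(τ)` the quotient map, the projection of
the recession cone of `σ` equals the recession cone of the projected polyhedron: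
`π(ρ(σ)) = ρ(π(σ))`. -/
theorem image_recCone_eq_recCone_image (n r : ℕ) (u : Fin r → Fin n → ℝ)
    (b : Fin r → ℝ) (σ τ : Set (Fin n → ℝ))
    (hσ : σ = {x | ∀ i, b i ≤ ∑ j, x j * u i j})
    (hne : σ.Nonempty)
    (hτ0 : (0 : Fin n → ℝ) ∈ τ)
    (hτadd : ∀ v ∈ τ, ∀ w ∈ τ, v + w ∈ τ)
    (hτsmul : ∀ v ∈ τ, ∀ t : ℝ, 0 ≤ t → t • v ∈ τ)
    (hτrec : τ ⊆ recCone σ) :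
    (Submodule.span ℝ τ).mkQ '' recCone σ
      = recCone ((Submodule.span ℝ τ).mkQ '' σ) := by
  set L := Submodule.span ℝ τ with hL
  obtain ⟨x₀, hx₀⟩ := hne
  -- the defining linear functionals
  set f : Fin r → (Fin n → ℝ) →ₗ[ℝ] ℝ := fun i =>
    { toFun := fun x => ∑ j, x j * u i j
      map_add' := by
        intro x y
        simp [add_mul, Finset.sum_add_distrib]
      map_smul' := by
        intro t x
        simp [Finset.mul_sum, mul_assoc] } with hf
  have hmemσ : ∀ x, x ∈ σ ↔ ∀ i, b i ≤ f i x := by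
    intro x; rw [hσ]; rfl
  -- recession cone characterization, one direction
  have hrec1 : ∀ v ∈ recCone σ, ∀ i, 0 ≤ f i v := by
    intro v hv i
    apply key_nonneg (f i x₀) (f i v) (b i)
    intro t ht
    have hx := hv x₀ hx₀ t ht
    rw [hmemσ] at hx
    have := hx i
    simpa [map_add, map_smul, mul_comm] using this
  -- and the other direction
  have hrec2 : ∀ v, (∀ i, 0 ≤ f i v) → v ∈ recCone σ := by
    intro v hv x hx t ht
    rw [hmemσ] at hx ⊢
    intro i
    have : f i (x + t • v) = f i x + t * f i v := by
      simp [map_add, map_smul]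
    rw [this]
    have : 0 ≤ t * f i v := mul_nonneg ht (hv i)
    linarith [hx i]
  apply Set.eq_of_subset_of_subset
  · -- easy direction
    rintro y ⟨v, hv, rfl⟩
    rintro x ⟨z, hz, rfl⟩ t ht
    refine ⟨z + t • v, hv z hz t ht, ?_⟩
    simp [map_add, map_smul]
  · -- hard direction
    rintro y hy
    obtain ⟨v, rfl⟩ := L.mkQ_surjective y
    -- for every t ≥ 0 there is z ∈ σ with x₀ + t • v - z ∈ L
    have hmem : ∀ t : ℝ, 0 ≤ t → ∃ z ∈ σ, x₀ + t • v - z ∈ L := by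
      intro t ht
      have := hy (L.mkQ x₀) ⟨x₀, hx₀, rfl⟩ t ht
      obtain ⟨z, hz, hzeq⟩ := this
      refine ⟨z, hz, ?_⟩
      rw [← Submodule.Quotient.eq]
      rw [Submodule.mkQ_apply] at hzeq
      rw [hzeq]
      simp [Submodule.Quotient.mk_add, Submodule.Quotient.mk_smul, Submodule.mkQ_apply]
    -- choose, for each i, a correction vector g i in τ
    have hgex : ∀ i : Fin r, ∃ g ∈ τ, (∀ j, 0 ≤ f j g) ∧ 0 ≤ f i v + f i g := by
      intro i
      by_cases hI : ∀ w ∈ τ, f i w = 0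
      · -- f i vanishes on L, so f i v ≥ 0 by the recession property of the image
        have hker : L ≤ LinearMap.ker (f i) := by
          rw [hL, Submodule.span_le]
          intro w hw
          exact hI w hw
        have hiv : 0 ≤ f i v := by
          apply key_nonneg (f i x₀) (f i v) (b i)
          intro t ht
          obtain ⟨z, hz, hzL⟩ := hmem t ht
          have h0 : f i (x₀ + t • v - z) = 0 := hker hzL
          have : f i z = f i x₀ + t * f i v := by
            have := h0
            simp only [map_sub, map_add, map_smul, smul_eq_mul, sub_eq_zero] at this
            linarith [this.symm]
          rw [hmemσ] at hz
          have := hz i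
          linarith
        exact ⟨0, hτ0, by simp, by simpa using hiv⟩
      · push_neg at hI
        obtain ⟨w, hwτ, hwne⟩ := hI
        have hwpos : 0 < f i w := lt_of_le_of_ne (hrec1 w (hτrec hwτ) i) (Ne.symm hwne)
        set c : ℝ := max 0 ((- f i v) / f i w) with hc
        have hc0 : 0 ≤ c := le_max_left _ _
        refine ⟨c • w, hτsmul w hwτ c hc0, ?_, ?_⟩
        · intro j
          rw [map_smul]
          exact mul_nonneg hc0 (hrec1 w (hτrec hwτ) j)
        · rw [map_smul, smul_eq_mul]
          have h1 : (- f i v) / f i w ≤ c := le_max_right _ _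
          have h2 : - f i v ≤ c * f i w := by
            rw [div_le_iff₀ hwpos] at h1
            linarith
          linarith
    choose g hgτ hgnn hgi using hgex
    set W : Fin n → ℝ := ∑ i : Fin r, g i with hW
    have hWτ : W ∈ τ := by
      rw [hW]
      apply Finset.sum_induction _ (· ∈ τ) (fun a b ha hb => hτadd a ha b hb) hτ0
      intro i _
      exact hgτ i
    have hvW : ∀ j, 0 ≤ f j (v + W) := by
      intro j
      rw [map_add, hW, map_sum]
      have hsum : f j (g j) ≤ ∑ i : Fin r, f j (g i) :=
        Finset.single_le_sum (fun i _ => hgnn i j) (Finset.mem_univ j)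
      linarith [hgi j]
    refine ⟨v + W, hrec2 _ hvW, ?_⟩
    have hWL : W ∈ L := Submodule.subset_span hWτ
    simp [map_add, (Submodule.Quotient.mk_eq_zero L).mpr hWL, Submodule.mkQ_apply]
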